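/- Let F be a field of characteristic ≠ 2 and n ≥ 2. The matrices B_{n,1}, B_{n,2}, …, B_{n,n−1} (where B_{n,l} has entries 1 in positions (n,1),…,(n,l) and 0 elsewhere) represent pairwise non-isomorphic algebras A(B_{n,l}) under degree-preserving isomorphisms; consequently, there are at least n − 1 isomorphism classes of algebras A(T) for T ranging over strictly lower triangular n×n matrices over F. -/

import Mathlib

open scoped BigOperators

noncomputable section

variable {F : Type} [Field F]

/-- `T` is strictly lower triangular. -/
def SLT {n : ℕ} (T : Matrix (Fin n) (Fin n) F) : Prop :=
  ∀ i j : Fin n, i ≤ j → T i j = 0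

/-- The ideal of relations defining the nil graded algebra `A(T)`:
`X i ^ 2 = ∑ j < i, T i j * X j * X i` (for `i = 0` the sum is empty, giving `X 0 ^ 2 = 0`). -/
def ntIdeal {n : ℕ} (T : Matrix (Fin n) (Fin n) F) : Ideal (MvPolynomial (Fin n) F) :=
  Ideal.span {p | ∃ i : Fin n,
    p = MvPolynomial.X i ^ 2 -
      ∑ j ∈ Finset.univ.filter (fun j => j < i),
        MvPolynomial.C (T i j) * MvPolynomial.X j * MvPolynomial.X i}

/-- The nil graded algebra `A(T)` associated to the strictly lower triangular matrix `T`. -/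
abbrev NTAlg {n : ℕ} (T : Matrix (Fin n) (Fin n) F) : Type :=
  MvPolynomial (Fin n) F ⧸ ntIdeal T

/-- The generator `X i` of `A(T)`. -/
def ntGen {n : ℕ} (T : Matrix (Fin n) (Fin n) F) (i : Fin n) : NTAlg T :=
  Ideal.Quotient.mk (ntIdeal T) (MvPolynomial.X i)

/-- There is a degree-preserving isomorphism `A(T) → A(S)`, i.e. an algebra isomorphism
sending each generator to an `F`-linear combination of the generators of the target. -/
def NTIso {n : ℕ} (T S : Matrix (Fin n) (Fin n) F) : Prop :=
  ∃ e : NTAlg T ≃ₐ[F] NTAlg S, ∃ Γ : Matrix (Fin n) (Fin n) F,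
    ∀ j : Fin n, e (ntGen T j) = ∑ i : Fin n, Γ i j • ntGen S i

/-- The matrix `B_{n,l}`: entries `1` in positions `(n, 1), …, (n, l)` (1-based), `0` elsewhere. -/
def Bnl (n l : ℕ) : Matrix (Fin n) (Fin n) F :=
  fun i j => if i.val = n - 1 ∧ j.val < l then (1 : F) else 0

namespace NT17
open MvPolynomial

variable {F : Type} [Field F] {n : ℕ}

def lf (a : Fin n → F) : MvPolynomial (Fin n) F := ∑ p, C (a p) * X p

def mon (i j : Fin n) : Fin n →₀ ℕ := Finsupp.single i 1 + Finsupp.single j 1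

lemma mon_comm (i j : Fin n) : mon i j = mon j i := add_comm _ _

lemma X_mul_X (p q : Fin n) :
    (X p * X q : MvPolynomial (Fin n) F) = monomial (mon p q) 1 := by
  rw [X, X, monomial_mul, one_mul, mon]

lemma mon_eq_iff {p q i j : Fin n} :
    mon p q = mon i j ↔ (p = i ∧ q = j) ∨ (p = j ∧ q = i) := by
  constructor
  · intro h
    by_cases hpi : p = i
    · left
      refine ⟨hpi, ?_⟩
      rw [mon, mon, hpi] at h
      have h2 : Finsupp.single q 1 = Finsupp.single j (1:ℕ) := add_left_cancel h
      exact (((Finsupp.single_eq_single_iff _ _ _ _).1 h2).resolve_right (by simp)).1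
    · have hpj : p = j := by
        have h2 := DFunLike.congr_fun h p
        simp only [mon, Finsupp.coe_add, Pi.add_apply, Finsupp.single_apply] at h2
        by_contra hpj
        have hip : ¬ (i = p) := fun hc => hpi hc.symm
        have hjp : ¬ (j = p) := fun hc => hpj hc.symm
        simp only [if_true, if_neg hip, if_neg hjp, add_zero] at h2
        split_ifs at h2 <;> omega
      right
      refine ⟨hpj, ?_⟩
      rw [mon_comm i j, mon, mon, hpj] at h
      have h2 : Finsupp.single q 1 = Finsupp.single i (1:ℕ) := add_left_cancel h
      exact (((Finsupp.single_eq_single_iff _ _ _ _).1 h2).resolve_right (by simp)).1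
  · rintro (⟨rfl, rfl⟩ | ⟨rfl, rfl⟩)
    · rfl
    · exact mon_comm _ _

lemma coeff_mon_XX (i j p q : Fin n) :
    coeff (mon i j) (X p * X q : MvPolynomial (Fin n) F)
      = if (p = i ∧ q = j) ∨ (p = j ∧ q = i) then 1 else 0 := by
  rw [X_mul_X, coeff_monomial]
  by_cases h : mon p q = mon i j
  · rw [if_pos h, if_pos (mon_eq_iff.1 h)]
  · rw [if_neg h, if_neg (fun hc => h (mon_eq_iff.2 hc))]

lemma lf_mul_lf (a b : Fin n → F) :
    lf a * lf b = ∑ p : Fin n, ∑ q : Fin n, C (a p * b q) * (X p * X q) := by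
  rw [lf, lf, Finset.sum_mul_sum]
  refine Finset.sum_congr rfl fun p _ => Finset.sum_congr rfl fun q _ => ?_
  rw [map_mul]; ring

lemma coeff_mon_lf_mul (a b : Fin n → F) (i j : Fin n) (hij : i ≠ j) :
    coeff (mon i j) (lf a * lf b) = a i * b j + a j * b i := by
  rw [lf_mul_lf]
  simp only [MvPolynomial.coeff_sum, coeff_C_mul, coeff_mon_XX, mul_ite, mul_one, mul_zero]
  have hf : ∀ p q : Fin n,
      (if (p = i ∧ q = j) ∨ (p = j ∧ q = i) then a p * b q else 0)
        = (if p = i ∧ q = j then a i * b j else 0)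
          + (if p = j ∧ q = i then a j * b i else 0) := by
    intro p q
    by_cases hpi : p = i <;> by_cases hpj : p = j <;>
      by_cases hqi : q = i <;> by_cases hqj : q = j <;> simp_all
  simp only [hf, Finset.sum_add_distrib, ite_and]
  simp [Finset.sum_ite_eq, Finset.sum_ite_eq']

lemma coeff_mon_lf_mul_diag (a b : Fin n → F) (i : Fin n) :
    coeff (mon i i) (lf a * lf b) = a i * b i := by
  rw [lf_mul_lf]
  simp only [MvPolynomial.coeff_sum, coeff_C_mul, coeff_mon_XX, mul_ite, mul_one, mul_zero,
    or_self]
  simp only [ite_and]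
  simp [Finset.sum_ite_eq, Finset.sum_ite_eq']

lemma coeff_single_lf (a : Fin n → F) (p : Fin n) :
    coeff (Finsupp.single p 1) (lf a) = a p := by
  rw [lf, MvPolynomial.coeff_sum]
  rw [Finset.sum_eq_single p]
  · rw [coeff_C_mul, coeff_X]; simp
  · intro q _ hq
    rw [coeff_C_mul, coeff_X', if_neg (by simp [Finsupp.single_eq_single_iff, hq])]
    ring
  · simp



def rel (T : Matrix (Fin n) (Fin n) F) (i : Fin n) : MvPolynomial (Fin n) F :=
  X i ^ 2 - ∑ j ∈ Finset.univ.filter (fun j => j < i), C (T i j) * X j * X i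

lemma isHomog_lf (a : Fin n → F) : (lf a).IsHomogeneous 1 := by
  apply IsHomogeneous.sum
  intro p _
  exact isHomogeneous_C_mul_X _ _

lemma isHomog_lf_mul (a b : Fin n → F) : (lf a * lf b).IsHomogeneous 2 :=
  (isHomog_lf a).mul (isHomog_lf b)

lemma isHomog_rel (T : Matrix (Fin n) (Fin n) F) (i : Fin n) :
    (rel T i).IsHomogeneous 2 := by
  rw [rel]
  rw [← mem_homogeneousSubmodule]
  apply Submodule.sub_mem
  · rw [mem_homogeneousSubmodule]
    exact isHomogeneous_X_pow i 2
  · rw [mem_homogeneousSubmodule]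
    apply IsHomogeneous.sum
    intro j _
    have : (C (T i j) * X j * X i : MvPolynomial (Fin n) F)
        = C (T i j) * (X j * X i) := by ring
    rw [this]
    exact ((isHomogeneous_X F j).mul (isHomogeneous_X F i)).C_mul _

lemma degree_add (d e : Fin n →₀ ℕ) : (d + e).degree = d.degree + e.degree := by
  simp only [Finsupp.degree_eq_weight_one]
  exact map_add _ _ _

lemma degree_eq_zero {d : Fin n →₀ ℕ} (h : d.degree = 0) : d = 0 :=
  (Finsupp.degree_eq_zero_iff d).1 h

/-- components of `f * g` for `g` homogeneous of degree 2. -/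
lemma hc2_mul {g : MvPolynomial (Fin n) F} (hg : g.IsHomogeneous 2)
    (f : MvPolynomial (Fin n) F) :
    homogeneousComponent 2 (f * g) = C (coeff 0 f) * g := by
  ext d
  rw [coeff_homogeneousComponent, coeff_C_mul]
  by_cases hd : d.degree = 2
  · rw [if_pos hd, coeff_mul]
    rw [Finset.sum_eq_single (0, d)]
    · rintro ⟨m1, m2⟩ hmem hne
      rw [Finset.HasAntidiagonal.mem_antidiagonal] at hmem
      by_cases h1 : m1 = 0
      · exfalso
        apply hne
        subst h1
        have : m2 = d := by simpa using hmem
        rw [this]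
      · have hdeg : m1.degree + m2.degree = 2 := by rw [← degree_add, hmem, hd]
        have : m2.degree ≠ 2 := by
          intro hc
          rw [hc] at hdeg
          have : m1.degree = 0 := by omega
          exact h1 (degree_eq_zero this)
        rw [hg.coeff_eq_zero this, mul_zero]
    · intro hc
      exact absurd (Finset.HasAntidiagonal.mem_antidiagonal.2 (zero_add d)) hc
  · rw [if_neg hd, hg.coeff_eq_zero hd, mul_zero]

lemma hc1_mul {g : MvPolynomial (Fin n) F} (hg : g.IsHomogeneous 2)
    (f : MvPolynomial (Fin n) F) :
    homogeneousComponent 1 (f * g) = 0 := by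
  ext d
  rw [coeff_homogeneousComponent]
  by_cases hd : d.degree = 1
  · rw [if_pos hd, coeff_mul]
    rw [coeff_zero]
    apply Finset.sum_eq_zero
    rintro ⟨m1, m2⟩ hmem
    rw [Finset.HasAntidiagonal.mem_antidiagonal] at hmem
    have hdeg : m1.degree + m2.degree = 1 := by rw [← degree_add, hmem, hd]
    have : m2.degree ≠ 2 := by omega
    rw [hg.coeff_eq_zero this, mul_zero]
  · rw [if_neg hd, coeff_zero]


lemma ntIdeal_eq (T : Matrix (Fin n) (Fin n) F) :
    ntIdeal T = Ideal.span (Set.range (rel T)) := by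
  unfold ntIdeal
  congr 1
  ext p
  constructor
  · rintro ⟨i, rfl⟩; exact ⟨i, rfl⟩
  · rintro ⟨i, rfl⟩; exact ⟨i, rfl⟩

lemma rel_mem (T : Matrix (Fin n) (Fin n) F) (i : Fin n) : rel T i ∈ ntIdeal T := by
  rw [ntIdeal_eq]
  exact Ideal.subset_span (Set.mem_range_self i)

lemma mk_rel (T : Matrix (Fin n) (Fin n) F) (i : Fin n) :
    Ideal.Quotient.mk (ntIdeal T) (rel T i) = 0 :=
  Ideal.Quotient.eq_zero_iff_mem.2 (rel_mem T i)

lemma comp_of_mem (T : Matrix (Fin n) (Fin n) F) {p : MvPolynomial (Fin n) F}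
    (hp : p ∈ ntIdeal T) :
    homogeneousComponent 1 p = 0 ∧
      homogeneousComponent 2 p ∈ Submodule.span F (Set.range (rel T)) := by
  rw [ntIdeal_eq] at hp
  have key : ∀ f : MvPolynomial (Fin n) F,
      homogeneousComponent 1 (f * p) = 0 ∧
        homogeneousComponent 2 (f * p) ∈ Submodule.span F (Set.range (rel T)) := by
    refine Submodule.span_induction ?_ ?_ ?_ ?_ hp
    · rintro x ⟨i, rfl⟩ f
      refine ⟨hc1_mul (isHomog_rel T i) f, ?_⟩
      rw [hc2_mul (isHomog_rel T i) f, ← smul_eq_C_mul]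
      exact Submodule.smul_mem _ _ (Submodule.subset_span (Set.mem_range_self i))
    · intro f
      simp
    · intro x y _ _ hx hy f
      rw [mul_add, map_add, map_add]
      exact ⟨by rw [(hx f).1, (hy f).1, add_zero],
        Submodule.add_mem _ (hx f).2 (hy f).2⟩
    · intro r x _ hx f
      rw [smul_eq_mul, ← mul_assoc]
      exact hx (f * r)
  have := key 1
  rwa [one_mul] at this

lemma mk_smul (I : Ideal (MvPolynomial (Fin n) F)) (t : F) (x : MvPolynomial (Fin n) F) :
    Ideal.Quotient.mk I (C t * x) = t • Ideal.Quotient.mk I x := by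
  rw [← smul_eq_C_mul]
  exact map_smul (Ideal.Quotient.mkₐ F I) t x

lemma mk_lf (T : Matrix (Fin n) (Fin n) F) (a : Fin n → F) :
    Ideal.Quotient.mk (ntIdeal T) (lf a) = ∑ i, a i • ntGen T i := by
  rw [lf, map_sum]
  exact Finset.sum_congr rfl fun i _ => mk_smul _ _ _

lemma lf_zero : lf (0 : Fin n → F) = 0 := by
  simp [lf]

lemma gamma_inj {T S : Matrix (Fin n) (Fin n) F} (e : NTAlg T ≃ₐ[F] NTAlg S)
    (Γ : Matrix (Fin n) (Fin n) F)
    (hΓ : ∀ j : Fin n, e (ntGen T j) = ∑ i : Fin n, Γ i j • ntGen S i)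
    (v : Fin n → F) (hv : Γ.mulVec v = 0) : v = 0 := by
  have h1 : e (Ideal.Quotient.mk (ntIdeal T) (lf v))
      = Ideal.Quotient.mk (ntIdeal S) (lf (Γ.mulVec v)) := by
    rw [mk_lf, mk_lf, map_sum]
    have : ∀ j ∈ Finset.univ, e (v j • ntGen T j) = ∑ i, (Γ i j * v j) • ntGen S i := by
      intro j _
      rw [map_smul, hΓ j, Finset.smul_sum]
      exact Finset.sum_congr rfl fun i _ => by rw [smul_smul, mul_comm]
    rw [Finset.sum_congr rfl this, Finset.sum_comm]
    refine Finset.sum_congr rfl fun i _ => ?_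
    rw [← Finset.sum_smul]
    congr 1
  rw [hv, lf_zero, map_zero] at h1
  have h2 : Ideal.Quotient.mk (ntIdeal T) (lf v) = 0 := by
    apply e.injective
    rw [h1, map_zero]
  have h3 := (comp_of_mem T (Ideal.Quotient.eq_zero_iff_mem.1 h2)).1
  rw [homogeneousComponent_of_mem ((mem_homogeneousSubmodule _ _).mpr (isHomog_lf v)),
    if_pos rfl] at h3
  funext p
  have := congrArg (coeff (Finsupp.single p 1)) h3
  rwa [coeff_single_lf, coeff_zero] at this


def PP (T Γ : Matrix (Fin n) (Fin n) F) (j : Fin n) : MvPolynomial (Fin n) F :=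
  lf (fun i => Γ i j) * lf (fun i => Γ i j)
    - ∑ k ∈ Finset.univ.filter (fun k => k < j),
        C (T j k) * (lf (fun i => Γ i k) * lf (fun i => Γ i j))

lemma isHomog_PP (T Γ : Matrix (Fin n) (Fin n) F) (j : Fin n) :
    (PP T Γ j).IsHomogeneous 2 := by
  rw [PP, ← mem_homogeneousSubmodule]
  apply Submodule.sub_mem
  · exact (mem_homogeneousSubmodule _ _).mpr (isHomog_lf_mul _ _)
  · rw [mem_homogeneousSubmodule]
    apply IsHomogeneous.sum
    intro k _
    exact (isHomog_lf_mul _ _).C_mul _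

lemma ntGen_def (T : Matrix (Fin n) (Fin n) F) (i : Fin n) :
    ntGen T i = Ideal.Quotient.mk (ntIdeal T) (X i) := rfl

lemma quot_rel (T : Matrix (Fin n) (Fin n) F) (j : Fin n) :
    ntGen T j * ntGen T j
      - ∑ k ∈ Finset.univ.filter (fun k => k < j), T j k • (ntGen T k * ntGen T j) = 0 := by
  have h0 := mk_rel T j
  rw [rel, pow_two, map_sub, map_sum, map_mul] at h0
  have : ∀ k ∈ Finset.univ.filter (fun k => k < j),
      Ideal.Quotient.mk (ntIdeal T) (C (T j k) * X k * X j)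
        = T j k • (ntGen T k * ntGen T j) := by
    intro k _
    rw [mul_assoc, mk_smul, map_mul, ntGen_def, ntGen_def]
  rw [Finset.sum_congr rfl this] at h0
  exact h0

lemma PP_mem {T S : Matrix (Fin n) (Fin n) F} (e : NTAlg T ≃ₐ[F] NTAlg S)
    (Γ : Matrix (Fin n) (Fin n) F)
    (hΓ : ∀ j : Fin n, e (ntGen T j) = ∑ i : Fin n, Γ i j • ntGen S i) (j : Fin n) :
    PP T Γ j ∈ ntIdeal S := by
  rw [← Ideal.Quotient.eq_zero_iff_mem]
  have hv : ∀ k : Fin n,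
      Ideal.Quotient.mk (ntIdeal S) (lf (fun i => Γ i k)) = e (ntGen T k) := by
    intro k
    rw [mk_lf]
    exact (hΓ k).symm
  have step1 : Ideal.Quotient.mk (ntIdeal S) (PP T Γ j)
      = e (ntGen T j) * e (ntGen T j)
        - ∑ k ∈ Finset.univ.filter (fun k => k < j),
            T j k • (e (ntGen T k) * e (ntGen T j)) := by
    rw [PP, map_sub, map_mul, map_sum, hv]
    refine congrArg₂ _ rfl ?_
    refine Finset.sum_congr rfl fun k _ => ?_
    rw [mk_smul, map_mul, hv, hv]
  rw [step1, ← map_mul]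
  have : ∀ k ∈ Finset.univ.filter (fun k => k < j),
      T j k • (e (ntGen T k) * e (ntGen T j))
        = e (T j k • (ntGen T k * ntGen T j)) := by
    intro k _
    rw [map_smul, map_mul]
  rw [Finset.sum_congr rfl this, ← map_sum, ← map_sub, quot_rel, map_zero]

lemma exists_coeffs {S : Matrix (Fin n) (Fin n) F} {p : MvPolynomial (Fin n) F}
    (hp : p ∈ ntIdeal S) (hhom : p.IsHomogeneous 2) :
    ∃ c : Fin n → F, ∑ i, c i • rel S i = p := by
  have h := (comp_of_mem S hp).2
  rw [homogeneousComponent_of_mem ((mem_homogeneousSubmodule _ _).mpr hhom),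
    if_pos rfl] at h
  exact (Submodule.mem_span_range_iff_exists_fun F).1 h

lemma coeff_rel_diag (S : Matrix (Fin n) (Fin n) F) (p i : Fin n) :
    coeff (mon p p) (rel S i) = if i = p then 1 else 0 := by
  rw [rel, coeff_sub, pow_two, coeff_mon_XX, MvPolynomial.coeff_sum]
  have : ∀ j ∈ Finset.univ.filter (fun j => j < i),
      coeff (mon p p) (C (S i j) * X j * X i) = 0 := by
    intro j hj
    have hji : j < i := (Finset.mem_filter.1 hj).2
    rw [mul_assoc, coeff_C_mul, coeff_mon_XX]
    by_cases hc : (j = p ∧ i = p) ∨ (j = p ∧ i = p)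
    · exfalso
      obtain ⟨h1, h2⟩ := hc.elim id id
      exact absurd (h1.trans h2.symm) (ne_of_lt hji)
    · rw [if_neg hc, mul_zero]
  rw [Finset.sum_congr rfl this, Finset.sum_const_zero, sub_zero]
  simp

lemma coeff_rel_B_offdiag {m : ℕ} (p q i : Fin n) (hpq : p ≠ q)
    (hp : p.val ≠ n - 1) (hq : q.val ≠ n - 1) :
    coeff (mon p q) (rel (Bnl n m : Matrix (Fin n) (Fin n) F) i) = 0 := by
  rw [rel, coeff_sub, pow_two, coeff_mon_XX, MvPolynomial.coeff_sum]
  have h1 : ¬ ((i = p ∧ i = q) ∨ (i = q ∧ i = p)) := by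
    rintro (⟨ha, hb⟩ | ⟨ha, hb⟩)
    · exact hpq (ha.symm.trans hb)
    · exact hpq (hb.symm.trans ha)
  rw [if_neg h1]
  have : ∀ j ∈ Finset.univ.filter (fun j => j < i),
      coeff (mon p q) (C ((Bnl n m : Matrix (Fin n) (Fin n) F) i j) * X j * X i) = 0 := by
    intro j hj
    rw [mul_assoc, coeff_C_mul, coeff_mon_XX]
    by_cases hc : (j = p ∧ i = q) ∨ (j = q ∧ i = p)
    · have hiv : i.val ≠ n - 1 := by
        rcases hc with ⟨_, rfl⟩ | ⟨_, rfl⟩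
        · exact hq
        · exact hp
      have : (Bnl n m : Matrix (Fin n) (Fin n) F) i j = 0 := by
        rw [Bnl, if_neg (fun hh => hiv hh.1)]
      rw [this, zero_mul]
    · rw [if_neg hc, mul_zero]
  rw [Finset.sum_congr rfl this, Finset.sum_const_zero, sub_zero]

lemma coeff_rel_B_last {m : ℕ} (hn : 1 ≤ n) (p q i : Fin n)
    (hp : p.val ≠ n - 1) (hq : q.val = n - 1) :
    coeff (mon p q) (rel (Bnl n m : Matrix (Fin n) (Fin n) F) i)
      = if i = q then -(if p.val < m then 1 else 0) else 0 := by
  have hpq : p ≠ q := fun hc => hp (by rw [hc, hq])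
  have hpltq : p < q := by
    have := p.isLt
    exact Fin.lt_def.mpr (by omega)
  rw [rel, coeff_sub, pow_two, coeff_mon_XX, MvPolynomial.coeff_sum]
  have h1 : ¬ ((i = p ∧ i = q) ∨ (i = q ∧ i = p)) := by
    rintro (⟨ha, hb⟩ | ⟨ha, hb⟩)
    · exact hpq (ha.symm.trans hb)
    · exact hpq (hb.symm.trans ha)
  rw [if_neg h1, zero_sub]
  by_cases hi : i = q
  · subst hi
    rw [if_pos rfl]
    congr 1
    have hterm : ∀ j ∈ Finset.univ.filter (fun j => j < i),
        coeff (mon p i) (C ((Bnl n m : Matrix (Fin n) (Fin n) F) i j) * X j * X i)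
          = if j = p then (if p.val < m then (1:F) else 0) else 0 := by
      intro j hj
      have hji : j < i := (Finset.mem_filter.1 hj).2
      rw [mul_assoc, coeff_C_mul, coeff_mon_XX]
      by_cases hjp : j = p
      · have hcond : (j = p ∧ i = i) ∨ (j = i ∧ i = p) := Or.inl ⟨hjp, rfl⟩
        rw [if_pos hcond, if_pos hjp, mul_one]
        rw [Bnl, hjp]
        by_cases hpm : p.val < m
        · rw [if_pos ⟨hq, hpm⟩, if_pos hpm]
        · rw [if_neg (fun hh => hpm hh.2), if_neg hpm]
      · have hcond : ¬ ((j = p ∧ i = i) ∨ (j = i ∧ i = p)) := by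
          rintro (⟨ha, _⟩ | ⟨ha, _⟩)
          · exact hjp ha
          · exact absurd ha (ne_of_lt hji)
        rw [if_neg hcond, mul_zero, if_neg hjp]
    rw [Finset.sum_congr rfl hterm,
      Finset.sum_ite_eq' (Finset.univ.filter (fun j => j < i)) p
        (fun _ => if (p:ℕ) < m then (1:F) else 0)]
    have hmem : p ∈ Finset.univ.filter (fun j => j < i) :=
      Finset.mem_filter.2 ⟨Finset.mem_univ p, hpltq⟩
    rw [if_pos hmem]
  · rw [if_neg hi]
    rw [neg_eq_zero]
    apply Finset.sum_eq_zero
    intro j hj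
    have hji : j < i := (Finset.mem_filter.1 hj).2
    rw [mul_assoc, coeff_C_mul, coeff_mon_XX]
    have hcond : ¬ ((j = p ∧ i = q) ∨ (j = q ∧ i = p)) := by
      rintro (⟨_, hb⟩ | ⟨ha, _⟩)
      · exact hi hb
      · subst ha
        have hle : i.val ≤ n - 1 := by omega
        have := Fin.lt_def.mp hji
        omega
    rw [if_neg hcond, mul_zero]


lemma coeff_PP_offdiag (T Γ : Matrix (Fin n) (Fin n) F) (j p q : Fin n) (hpq : p ≠ q) :
    coeff (mon p q) (PP T Γ j)
      = (Γ p j * Γ q j + Γ q j * Γ p j)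
        - ∑ k ∈ Finset.univ.filter (fun k => k < j),
            T j k * (Γ p k * Γ q j + Γ q k * Γ p j) := by
  rw [PP, coeff_sub, coeff_mon_lf_mul _ _ _ _ hpq, MvPolynomial.coeff_sum]
  congr 1
  refine Finset.sum_congr rfl fun k _ => ?_
  rw [coeff_C_mul, coeff_mon_lf_mul _ _ _ _ hpq]

lemma coeff_PP_diag (T Γ : Matrix (Fin n) (Fin n) F) (j p : Fin n) :
    coeff (mon p p) (PP T Γ j)
      = Γ p j * Γ p j
        - ∑ k ∈ Finset.univ.filter (fun k => k < j), T j k * (Γ p k * Γ p j) := by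
  rw [PP, coeff_sub, coeff_mon_lf_mul_diag, MvPolynomial.coeff_sum]
  congr 1
  refine Finset.sum_congr rfl fun k _ => ?_
  rw [coeff_C_mul, coeff_mon_lf_mul_diag]

lemma coeff_combo (S : Matrix (Fin n) (Fin n) F) (c : Fin n → F) (d : Fin n →₀ ℕ) :
    coeff d (∑ i, c i • rel S i) = ∑ i, c i * coeff d (rel S i) := by
  rw [MvPolynomial.coeff_sum]
  exact Finset.sum_congr rfl fun i _ => by rw [coeff_smul, smul_eq_mul]

lemma card_filter_val_lt {m : ℕ} (hm : m ≤ n) :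
    (Finset.univ.filter (fun p : Fin n => p.val < m)).card = m := by
  have : Finset.univ.filter (fun p : Fin n => p.val < m)
      = (Finset.univ : Finset (Fin m)).map
          (Fin.castLEEmb hm) := by
    ext x
    simp only [Finset.mem_filter, Finset.mem_univ, true_and, Finset.mem_map,
      Fin.castLEEmb_apply]
    constructor
    · intro hx
      exact ⟨⟨x.val, hx⟩, Fin.ext rfl⟩
    · rintro ⟨y, rfl⟩
      exact y.isLt
  rw [this, Finset.card_map, Finset.card_univ, Fintype.card_fin]


lemma Bnl_apply (l : ℕ) (i j : Fin n) :
    (Bnl n l : Matrix (Fin n) (Fin n) F) i j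
      = if i.val = n - 1 ∧ j.val < l then (1:F) else 0 := rfl

lemma main_not_iso (h2 : (2:F) ≠ 0) {l m : ℕ} (hl : 1 ≤ l) (hlm : l < m)
    (hmn : m < n) :
    ¬ NTIso (Bnl n l : Matrix (Fin n) (Fin n) F) (Bnl n m) := by
  have hn3 : 3 ≤ n := by omega
  rintro ⟨e, Γ, hΓ⟩
  set last : Fin n := ⟨n-1, by omega⟩ with hlastdef
  have hlastval : (last : ℕ) = n - 1 := rfl
  have hne_last : ∀ p : Fin n, p ≠ last ↔ (p : ℕ) ≠ n - 1 := by
    intro p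
    constructor
    · intro h hc
      exact h (Fin.ext hc)
    · intro h hc
      exact h (by rw [hc])
  have hPP : ∀ j, ∃ c : Fin n → F, ∑ i, c i • rel (Bnl n m : Matrix (Fin n) (Fin n) F) i = PP (Bnl n l) Γ j := fun j =>
    exists_coeffs (PP_mem e Γ hΓ j) (isHomog_PP (Bnl n l) Γ j)
  choose cc hcc using hPP
  have EQdiag : ∀ j p : Fin n,
      Γ p j * Γ p j - ∑ k ∈ Finset.univ.filter (fun k => k < j), (Bnl n l : Matrix (Fin n) (Fin n) F) j k * (Γ p k * Γ p j)
        = cc j p := by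
    intro j p
    have h := congrArg (coeff (mon p p)) (hcc j)
    rw [coeff_combo, coeff_PP_diag] at h
    rw [← h]
    have hterm : ∀ i ∈ Finset.univ, cc j i * coeff (mon p p) (rel (Bnl n m : Matrix (Fin n) (Fin n) F) i)
        = if i = p then cc j i else 0 := by
      intro i _
      rw [coeff_rel_diag]
      by_cases hip : i = p
      · rw [if_pos hip, if_pos hip, mul_one]
      · rw [if_neg hip, if_neg hip, mul_zero]
    rw [Finset.sum_congr rfl hterm, Finset.sum_ite_eq' Finset.univ p (fun i => cc j i),
      if_pos (Finset.mem_univ p)]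
  have EQoff : ∀ j p q : Fin n, p ≠ q → p ≠ last → q ≠ last →
      (Γ p j * Γ q j + Γ q j * Γ p j)
        - ∑ k ∈ Finset.univ.filter (fun k => k < j),
            (Bnl n l : Matrix (Fin n) (Fin n) F) j k * (Γ p k * Γ q j + Γ q k * Γ p j) = 0 := by
    intro j p q hpq hp hq
    have h := congrArg (coeff (mon p q)) (hcc j)
    rw [coeff_combo, coeff_PP_offdiag _ _ _ _ _ hpq] at h
    rw [← h]
    apply Finset.sum_eq_zero
    intro i _
    rw [coeff_rel_B_offdiag _ _ _ hpq ((hne_last p).1 hp) ((hne_last q).1 hq), mul_zero]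
  have EQlast : ∀ j p : Fin n, p ≠ last →
      (Γ p j * Γ last j + Γ last j * Γ p j)
        - ∑ k ∈ Finset.univ.filter (fun k => k < j),
            (Bnl n l : Matrix (Fin n) (Fin n) F) j k * (Γ p k * Γ last j + Γ last k * Γ p j)
      = cc j last * -(if (p:ℕ) < m then 1 else 0) := by
    intro j p hp
    have h := congrArg (coeff (mon p last)) (hcc j)
    rw [coeff_combo, coeff_PP_offdiag _ _ _ _ _ hp] at h
    rw [← h]
    have hterm : ∀ i ∈ Finset.univ, cc j i * coeff (mon p last) (rel (Bnl n m : Matrix (Fin n) (Fin n) F) i)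
        = if i = last then cc j i * -(if (p:ℕ) < m then 1 else 0) else 0 := by
      intro i _
      rw [coeff_rel_B_last (by omega) _ _ _ ((hne_last p).1 hp) hlastval]
      by_cases hil : i = last
      · rw [if_pos hil, if_pos hil]
      · rw [if_neg hil, if_neg hil, mul_zero]
    rw [Finset.sum_congr rfl hterm,
      Finset.sum_ite_eq' Finset.univ last
        (fun i => cc j i * -(if (p:ℕ) < m then 1 else 0)),
      if_pos (Finset.mem_univ last)]
  have hTne : ∀ j k : Fin n, j ≠ last → (Bnl n l : Matrix (Fin n) (Fin n) F) j k = 0 := by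
    intro j k hj
    rw [Bnl_apply]
    exact if_neg (fun hc => (hne_last j).1 hj hc.1)
  have hTlast : ∀ k : Fin n, (Bnl n l : Matrix (Fin n) (Fin n) F) last k = if (k:ℕ) < l then 1 else 0 := by
    intro k
    rw [Bnl_apply]
    by_cases hk : (k:ℕ) < l
    · rw [if_pos ⟨hlastval, hk⟩, if_pos hk]
    · rw [if_neg (fun hc => hk hc.2), if_neg hk]
  have sum0 : ∀ (j : Fin n) (f : Fin n → F), j ≠ last →
      ∑ k ∈ Finset.univ.filter (fun k => k < j), (Bnl n l : Matrix (Fin n) (Fin n) F) j k * f k = 0 := by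
    intro j f hj
    apply Finset.sum_eq_zero
    intro k _
    rw [hTne j k hj, zero_mul]
  have colprod : ∀ j p q : Fin n, j ≠ last → p ≠ q → p ≠ last → q ≠ last →
      Γ p j * Γ q j = 0 := by
    intro j p q hj hpq hp hq
    have h := EQoff j p q hpq hp hq
    rw [sum0 j _ hj, sub_zero] at h
    have h' : 2 * (Γ p j * Γ q j) = 0 := by linear_combination h
    rcases mul_eq_zero.1 h' with hc | hc
    · exact absurd hc h2
    · exact hc
  set i0 : Fin n := ⟨0, by omega⟩ with hi0def
  set i1 : Fin n := ⟨1, by omega⟩ with hi1def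
  have hi0last : i0 ≠ last := by
    rw [hne_last]
    show (0:ℕ) ≠ n - 1
    omega
  have hi1last : i1 ≠ last := by
    rw [hne_last]
    show (1:ℕ) ≠ n - 1
    omega
  have hi01 : i0 ≠ i1 := by
    intro hc
    have := congrArg Fin.val hc
    simp only [hi0def, hi1def] at this
    omega
  have hi0m : ((i0:Fin n) : ℕ) < m := by
    show (0:ℕ) < m
    omega
  have hi1m : ((i1:Fin n) : ℕ) < m := by
    show (1:ℕ) < m
    omega
  have collast0 : ∀ j : Fin n, j ≠ last → Γ last j = 0 := by
    intro j hj
    by_contra hmu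
    have hd := EQdiag j last
    rw [sum0 j _ hj, sub_zero] at hd
    have key : ∀ p : Fin n, p ≠ last → (p:ℕ) < m → Γ p j ≠ 0 := by
      intro p hp hpm hc
      have h := EQlast j p hp
      rw [sum0 j _ hj, sub_zero, ← hd, if_pos hpm, hc] at h
      have hzz : Γ last j * Γ last j = 0 := by linear_combination h
      rcases mul_eq_zero.1 hzz with hc' | hc' <;> exact hmu hc'
    have h01 := colprod j i0 i1 hj hi01 hi0last hi1last
    rcases mul_eq_zero.1 h01 with hc | hc
    · exact key i0 hi0last hi0m hc
    · exact key i1 hi1last hi1m hc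
  have hmu : Γ last last ≠ 0 := by
    intro hmu0
    have hrow : ∀ j : Fin n, Γ last j = 0 := by
      intro j
      by_cases hj : j = last
      · rw [hj]; exact hmu0
      · exact collast0 j hj
    have hinj : Function.Injective (Matrix.mulVecLin Γ) := by
      intro v v' hvv
      have h0 : Γ.mulVec (v - v') = 0 := by
        have : Matrix.mulVecLin Γ (v - v') = 0 := by
          rw [map_sub, hvv, sub_self]
        rwa [Matrix.mulVecLin_apply] at this
      have := gamma_inj e Γ hΓ (v - v') h0
      exact sub_eq_zero.1 this
    have hsurj := LinearMap.injective_iff_surjective.1 hinj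
    obtain ⟨v, hv⟩ := hsurj (fun i => if i = last then (1:F) else 0)
    have hlast1 := congrFun hv last
    rw [if_pos rfl] at hlast1
    have hLHS : Matrix.mulVecLin Γ v last = 0 := by
      rw [Matrix.mulVecLin_apply]
      show ∑ j, Γ last j * v j = 0
      apply Finset.sum_eq_zero
      intro j _
      rw [hrow j, zero_mul]
    rw [hLHS] at hlast1
    exact zero_ne_one hlast1
  set w : Fin n → F := fun p =>
    ∑ k ∈ Finset.univ.filter (fun k => k < last), (if (k:ℕ) < l then (1:F) else 0) * Γ p k
    with hw
  have hccll : cc last last = Γ last last * Γ last last := by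
    have hd := EQdiag last last
    rw [← hd]
    have hz : ∑ k ∈ Finset.univ.filter (fun k => k < last),
        (Bnl n l : Matrix (Fin n) (Fin n) F) last k * (Γ last k * Γ last last) = 0 := by
      apply Finset.sum_eq_zero
      intro k hk
      have hkl : k ≠ last := ne_of_lt (Finset.mem_filter.1 hk).2
      rw [collast0 k hkl]
      ring
    rw [hz, sub_zero]
  have E4 : ∀ p : Fin n, p ≠ last →
      2 * (Γ p last * Γ last last) - w p * Γ last last
        = (Γ last last * Γ last last) * -(if (p:ℕ) < m then 1 else 0) := by
    intro p hp
    have h := EQlast last p hp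
    rw [hccll] at h
    have hsum : ∑ k ∈ Finset.univ.filter (fun k => k < last),
        (Bnl n l : Matrix (Fin n) (Fin n) F) last k * (Γ p k * Γ last last + Γ last k * Γ p last)
        = w p * Γ last last := by
      rw [hw]
      rw [Finset.sum_mul]
      refine Finset.sum_congr rfl fun k hk => ?_
      have hkl : k ≠ last := ne_of_lt (Finset.mem_filter.1 hk).2
      rw [hTlast, collast0 k hkl]
      ring
    rw [hsum] at h
    linear_combination h
  have E5 : ∀ p q : Fin n, p ≠ q → p ≠ last → q ≠ last →
      2 * (Γ p last * Γ q last) - (w p * Γ q last + w q * Γ p last) = 0 := by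
    intro p q hpq hp hq
    have h := EQoff last p q hpq hp hq
    have hsum : ∑ k ∈ Finset.univ.filter (fun k => k < last),
        (Bnl n l : Matrix (Fin n) (Fin n) F) last k * (Γ p k * Γ q last + Γ q k * Γ p last)
        = w p * Γ q last + w q * Γ p last := by
      rw [hw]
      have hterm : ∀ k ∈ Finset.univ.filter (fun k => k < last),
          (Bnl n l : Matrix (Fin n) (Fin n) F) last k * (Γ p k * Γ q last + Γ q k * Γ p last)
            = ((if (k:ℕ) < l then (1:F) else 0) * Γ p k) * Γ q last
              + ((if (k:ℕ) < l then (1:F) else 0) * Γ q k) * Γ p last := by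
        intro k _
        rw [hTlast]
        ring
      rw [Finset.sum_congr rfl hterm, Finset.sum_add_distrib, ← Finset.sum_mul,
        ← Finset.sum_mul]
    rw [hsum] at h
    linear_combination h
  have pprod : ∀ j p q : Fin n, j ≠ last → p ≠ q → Γ p j * Γ q j = 0 := by
    intro j p q hj hpq
    by_cases hp : p = last
    · rw [hp, collast0 j hj, zero_mul]
    · by_cases hq : q = last
      · rw [hq, collast0 j hj, mul_zero]
      · exact colprod j p q hj hpq hp hq
  classical
  set K : Finset (Fin n) := Finset.univ.filter (fun k : Fin n => (k:ℕ) < l) with hK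
  set sfun : Fin n → Fin n := fun k =>
    if h : ∃ p, Γ p k ≠ 0 then h.choose else i0 with hsfun
  have hs : ∀ k : Fin n, k ≠ last → ∀ p, p ≠ sfun k → Γ p k = 0 := by
    intro k hk p hp
    by_cases h : ∃ p, Γ p k ≠ 0
    · have hsk : Γ (sfun k) k ≠ 0 := by
        rw [hsfun]
        simp only [dif_pos h]
        exact h.choose_spec
      have hpr := pprod k p (sfun k) hk hp
      rcases mul_eq_zero.1 hpr with hc | hc
      · exact hc
      · exact absurd hc hsk
    · push_neg at h
      exact h p
  have hcard : (K.image sfun).card < (Finset.univ.filter (fun p : Fin n => (p:ℕ) < m)).card := by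
    calc (K.image sfun).card ≤ K.card := Finset.card_image_le
      _ = l := by rw [hK]; exact card_filter_val_lt (by omega)
      _ < m := hlm
      _ = _ := (card_filter_val_lt (le_of_lt hmn)).symm
  obtain ⟨p₀, hp₀A, hp₀B⟩ :
      ∃ p₀ ∈ Finset.univ.filter (fun p : Fin n => (p:ℕ) < m), p₀ ∉ K.image sfun := by
    by_contra hcon
    push_neg at hcon
    have hsub : Finset.univ.filter (fun p : Fin n => (p:ℕ) < m) ⊆ K.image sfun :=
      fun x hx => hcon x hx
    have hle := Finset.card_le_card hsub
    omega
  have hp₀m : ((p₀ : Fin n) : ℕ) < m := (Finset.mem_filter.1 hp₀A).2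
  have hp₀last : p₀ ≠ last := by
    rw [hne_last]
    omega
  have hwp₀ : w p₀ = 0 := by
    rw [hw]
    apply Finset.sum_eq_zero
    intro k hk
    by_cases hkl : (k:ℕ) < l
    · have hkK : k ∈ K := by
        rw [hK]
        exact Finset.mem_filter.2 ⟨Finset.mem_univ k, hkl⟩
      have hkne : k ≠ last := ne_of_lt (Finset.mem_filter.1 hk).2
      have hz : Γ p₀ k = 0 := by
        apply hs k hkne
        intro hc
        exact hp₀B (Finset.mem_image.2 ⟨k, hkK, hc.symm⟩)
      rw [hz, mul_zero]
    · rw [if_neg hkl, zero_mul]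
  have hE4p₀ := E4 p₀ hp₀last
  rw [hwp₀, zero_mul, sub_zero, if_pos hp₀m] at hE4p₀
  have hap₀ : Γ p₀ last ≠ 0 := by
    intro hc
    rw [hc] at hE4p₀
    have hzz : Γ last last * Γ last last = 0 := by linear_combination hE4p₀
    rcases mul_eq_zero.1 hzz with hc' | hc' <;> exact hmu hc'
  set j₀ : Fin n := if p₀ = i0 then i1 else i0 with hj₀def
  have hj₀ne : j₀ ≠ p₀ := by
    rw [hj₀def]
    by_cases hcase : p₀ = i0
    · rw [if_pos hcase, hcase]
      exact hi01.symm
    · rw [if_neg hcase]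
      exact fun hc => hcase hc.symm
  have hj₀last : j₀ ≠ last := by
    rw [hj₀def]
    by_cases hcase : p₀ = i0
    · rw [if_pos hcase]; exact hi1last
    · rw [if_neg hcase]; exact hi0last
  have hj₀m : ((j₀ : Fin n) : ℕ) < m := by
    rw [hj₀def]
    by_cases hcase : p₀ = i0
    · rw [if_pos hcase]; exact hi1m
    · rw [if_neg hcase]; exact hi0m
  have hE5 := E5 p₀ j₀ (Ne.symm hj₀ne) hp₀last hj₀last
  rw [hwp₀] at hE5
  have hkey : 2 * Γ j₀ last - w j₀ = 0 := by
    have hfac : Γ p₀ last * (2 * Γ j₀ last - w j₀) = 0 := by linear_combination hE5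
    rcases mul_eq_zero.1 hfac with hc | hc
    · exact absurd hc hap₀
    · exact hc
  have hE4j₀ := E4 j₀ hj₀last
  rw [if_pos hj₀m] at hE4j₀
  have hfinal : Γ last last * Γ last last = 0 := by
    linear_combination hE4j₀ - Γ last last * hkey
  rcases mul_eq_zero.1 hfinal with hc | hc <;> exact hmu hc

lemma ntiso_symm {T S : Matrix (Fin n) (Fin n) F} (h : NTIso T S) : NTIso S T := by
  obtain ⟨e, Γ, hΓ⟩ := h
  have hinj : Function.Injective Γ.mulVec := by
    intro v v' hvv
    have h0 : Γ.mulVec (v - v') = 0 := by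
      rw [Matrix.mulVec_sub, hvv, sub_self]
    exact sub_eq_zero.1 (gamma_inj e Γ hΓ (v - v') h0)
  have hunit : IsUnit Γ := Matrix.mulVec_injective_iff_isUnit.1 hinj
  have hdet := (Matrix.isUnit_iff_isUnit_det Γ).1 hunit
  have hGG : Γ * Γ⁻¹ = 1 := Matrix.mul_nonsing_inv Γ hdet
  refine ⟨e.symm, Γ⁻¹, fun i => ?_⟩
  refine e.injective ?_
  rw [e.apply_symm_apply, map_sum]
  symm
  have h1 : ∀ j ∈ Finset.univ, e (Γ⁻¹ j i • ntGen T j)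
      = ∑ k, (Γ k j * Γ⁻¹ j i) • ntGen S k := by
    intro j _
    rw [map_smul, hΓ j, Finset.smul_sum]
    exact Finset.sum_congr rfl fun k _ => by rw [smul_smul, mul_comm]
  rw [Finset.sum_congr rfl h1, Finset.sum_comm]
  have h2 : ∀ k ∈ Finset.univ, ∑ j, (Γ k j * Γ⁻¹ j i) • ntGen S k
      = ((Γ * Γ⁻¹) k i) • ntGen S k := by
    intro k _
    rw [← Finset.sum_smul, Matrix.mul_apply]
  rw [Finset.sum_congr rfl h2, hGG]
  have h3 : ∀ k ∈ Finset.univ,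
      ((1 : Matrix (Fin n) (Fin n) F) k i) • ntGen S k
        = if k = i then ntGen S i else 0 := by
    intro k _
    rw [Matrix.one_apply]
    by_cases hk : k = i
    · rw [if_pos hk, if_pos hk, one_smul, hk]
    · rw [if_neg hk, if_neg hk, zero_smul]
  rw [Finset.sum_congr rfl h3,
    Finset.sum_ite_eq' Finset.univ i (fun _ => ntGen S i),
    if_pos (Finset.mem_univ i)]

end NT17

/-- The matrices `B_{n,1}, …, B_{n,n−1}` give pairwise non-isomorphic algebras; hence there
are at least `n − 1` isomorphism classes of algebras `A(T)`. -/
theorem stmt17 {n : ℕ} (h2 : (2 : F) ≠ 0) (hn : 2 ≤ n) :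
    (∀ l m : ℕ, 1 ≤ l → l < m → m < n →
      ¬ NTIso (Bnl n l : Matrix (Fin n) (Fin n) F) (Bnl n m : Matrix (Fin n) (Fin n) F)) ∧
    ∃ Ts : Fin (n - 1) → Matrix (Fin n) (Fin n) F,
      (∀ i, SLT (Ts i)) ∧ Pairwise fun i j => ¬ NTIso (Ts i) (Ts j) := by
  constructor
  · intro l m hl hlm hmn
    exact NT17.main_not_iso h2 hl hlm hmn
  · refine ⟨fun i => Bnl n (i.val + 1), ?_, ?_⟩
    · intro i a b hab
      have hi := i.isLt
      have hab' : (a : ℕ) ≤ (b : ℕ) := hab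
      have hb := b.isLt
      apply if_neg
      rintro ⟨h1, h2p⟩
      omega
    · intro i j hij
      have hvals : (i : ℕ) ≠ (j : ℕ) := fun hc => hij (Fin.ext hc)
      have hi := i.isLt
      have hj := j.isLt
      rcases Nat.lt_or_ge (i : ℕ) (j : ℕ) with hlt | hge
      · exact NT17.main_not_iso h2 (by omega) (by omega) (by omega)
      · intro hiso
        exact NT17.main_not_iso h2 (l := (j:ℕ)+1) (m := (i:ℕ)+1)
          (by omega) (by omega) (by omega) (NT17.ntiso_symm hiso)
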